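/- Let (A,B,C,f,g) be a three-term complex in 𝒞, i.e. f : A ⟶ B, g : B ⟶ C with f ≫ g = 0. Suppose that the map Hom(B⟦1⟧, C) → Hom(A⟦1⟧, C) given by pre-composition with f⟦1⟧, v ↦ f⟦1⟧ ≫ v, is surjective. Then any two convolutions of left Postnikov systems associated to (A,B,C,f,g) are isomorphic: if Z₁ is a convolution of some left Postnikov system associated to the complex and Z₂ is a convolution of some (possibly different) left Postnikov system associated to the complex, then Z₁ ≅ Z₂. -/

import Mathlib

open CategoryTheory Category Limits Pretriangulated

/-- If `Hom(B⟦1⟧, C) → Hom(A⟦1⟧, C)`, `v ↦ f⟦1⟧ ≫ v`, is surjective, then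
any two convolutions of left Postnikov systems associated to the three-term complex
`A ⟶f B ⟶g C` are isomorphic. -/
theorem left_postnikov_convolutions_iso_of_precomp_surjective
    {𝒞 : Type*} [Category 𝒞] [HasZeroObject 𝒞] [HasShift 𝒞 ℤ] [Preadditive 𝒞]
    [∀ n : ℤ, (CategoryTheory.shiftFunctor 𝒞 n).Additive] [Pretriangulated 𝒞]
    {A B C : 𝒞} (f : A ⟶ B) (g : B ⟶ C) (hfg : f ≫ g = 0)
    (hsurj : Function.Surjective (fun v : B⟦(1 : ℤ)⟧ ⟶ C => f⟦(1 : ℤ)⟧' ≫ v))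
    {Y₁ Y₂ Z₁ Z₂ : 𝒞}
    (k₁ : B ⟶ Y₁) (l₁ : Y₁ ⟶ A⟦(1 : ℤ)⟧) (hT₁ : Triangle.mk f k₁ l₁ ∈ distTriang 𝒞)
    (m₁ : Y₁ ⟶ C) (hm₁ : k₁ ≫ m₁ = g)
    (p₁ : C ⟶ Z₁) (q₁ : Z₁ ⟶ Y₁⟦(1 : ℤ)⟧)
    (hZ₁ : Triangle.mk m₁ p₁ q₁ ∈ distTriang 𝒞)
    (k₂ : B ⟶ Y₂) (l₂ : Y₂ ⟶ A⟦(1 : ℤ)⟧) (hT₂ : Triangle.mk f k₂ l₂ ∈ distTriang 𝒞)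
    (m₂ : Y₂ ⟶ C) (hm₂ : k₂ ≫ m₂ = g)
    (p₂ : C ⟶ Z₂) (q₂ : Z₂ ⟶ Y₂⟦(1 : ℤ)⟧)
    (hZ₂ : Triangle.mk m₂ p₂ q₂ ∈ distTriang 𝒞) :
    Nonempty (Z₁ ≅ Z₂) := by
  -- complete the identity on A, B to a morphism of triangles, c : Y₁ ⟶ Y₂
  obtain ⟨c, hc₁, hc₂⟩ := complete_distinguished_triangle_morphism _ _ hT₁ hT₂ (𝟙 A) (𝟙 B)
    (by exact (comp_id f).trans (id_comp f).symm)
  change Y₁ ⟶ Y₂ at c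
  change k₁ ≫ c = 𝟙 B ≫ k₂ at hc₁
  change l₁ ≫ (shiftFunctor 𝒞 (1 : ℤ)).map (𝟙 A) = c ≫ l₂ at hc₂
  rw [id_comp] at hc₁
  have hcIso : IsIso c := by
    have := isIso₃_of_isIso₁₂
      (T := Triangle.mk f k₁ l₁) (T' := Triangle.mk f k₂ l₂)
      { hom₁ := 𝟙 A, hom₂ := 𝟙 B, hom₃ := c,
        comm₁ := by exact (comp_id f).trans (id_comp f).symm, comm₂ := by exact hc₁.trans (id_comp k₂).symm, comm₃ := by exact hc₂ }
      hT₁ hT₂ (by exact IsIso.id A) (by exact IsIso.id B)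
    exact this
  -- m₁ = c ≫ m₂
  have hk : k₁ ≫ (m₁ - c ≫ m₂) = 0 := by
    rw [Preadditive.comp_sub, hm₁, ← assoc, hc₁, hm₂, sub_self]
  obtain ⟨w, hw⟩ := Triangle.yoneda_exact₃ _ hT₁ (m₁ - c ≫ m₂) hk
  obtain ⟨v, hv⟩ := hsurj w
  have hl : l₁ ≫ f⟦(1 : ℤ)⟧' = 0 := comp_distTriang_mor_zero₃₁ _ hT₁
  have hm : m₁ = c ≫ m₂ := by
    have : m₁ - c ≫ m₂ = 0 := by
      rw [hw, ← hv]
      dsimp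
      exact ((reassoc_of% hl) v).trans zero_comp
    rw [← sub_eq_zero]; exact this
  -- complete (c, 𝟙 C) to a morphism of the convolution triangles
  obtain ⟨d, hd₁, hd₂⟩ := complete_distinguished_triangle_morphism _ _ hZ₁ hZ₂ c (𝟙 C)
    (by exact (comp_id m₁).trans hm)
  change p₁ ≫ d = 𝟙 C ≫ p₂ at hd₁
  change q₁ ≫ (shiftFunctor 𝒞 (1 : ℤ)).map c = d ≫ q₂ at hd₂
  have : IsIso d := isIso₃_of_isIso₁₂
    (T := Triangle.mk m₁ p₁ q₁) (T' := Triangle.mk m₂ p₂ q₂)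
    { hom₁ := c, hom₂ := 𝟙 C, hom₃ := d,
      comm₁ := by exact (comp_id m₁).trans hm,
      comm₂ := by exact hd₁, comm₃ := by exact hd₂ }
    hZ₁ hZ₂ hcIso (by exact IsIso.id C)
  exact ⟨@asIso _ _ _ _ d this⟩
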